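/- The constant term in x of (4t + (5t−1)x)/(2t + (5t−1)x + 2tx²), viewed as a formal power series in t with coefficients Laurent series in x, equals 1. -/

import Mathlib

open PowerSeries

/-- The Laurent series `x` in `ℚ((x))`. -/
noncomputable def xL : LaurentSeries ℚ := HahnSeries.single 1 1

/-- The rational function `(4t + (5t−1)x) / (2t + (5t−1)x + 2tx²)` expanded as an
element of `ℚ((x))[[t]] ⊆ ℚ((x))((t))`: numerator `−x + (4+5x)t`, denominator
`−x + (2+5x+2x²)t`, the latter being invertible since its constant term `−x` is a
nonzero Laurent series. -/
noncomputable def ratCT : PowerSeries (LaurentSeries ℚ) :=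
  (C (-xL) + C (4 + 5 * xL) * X) *
    (C (-xL) + C (2 + 5 * xL + 2 * xL ^ 2) * X)⁻¹

namespace Stmt12Aux

/-- abbreviation for the denominator quadratic -/
noncomputable def q : LaurentSeries ℚ := 2 + 5 * xL + 2 * xL ^ 2

/-- The explicit inverse of the denominator. -/
noncomputable def ψ : PowerSeries (LaurentSeries ℚ) :=
  PowerSeries.mk fun n => -(q ^ n * HahnSeries.single (-(n + 1) : ℤ) 1)

lemma xL_mul_single (m : ℤ) : xL * HahnSeries.single m 1 = HahnSeries.single (1 + m) 1 := by
  rw [xL, HahnSeries.single_mul_single, mul_one]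

lemma xL_ne_zero : xL ≠ 0 := by
  rw [xL]; exact HahnSeries.single_ne_zero one_ne_zero

lemma key_mul :
    (C (-xL) + C (2 + 5 * xL + 2 * xL ^ 2) * X) * ψ = 1 := by
  have hq : (2 + 5 * xL + 2 * xL ^ 2 : LaurentSeries ℚ) = q := rfl
  rw [hq]
  refine PowerSeries.ext fun n => ?_
  rcases n with _ | n
  · have h0 : xL * HahnSeries.single (-1 : ℤ) 1 = 1 := by
      rw [xL_mul_single]; norm_num [HahnSeries.single_zero_one]
    simp only [add_mul, map_add, mul_assoc, coeff_C_mul, coeff_zero_X_mul, mul_zero, add_zero,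
      ψ, coeff_mk, coeff_zero_eq_constantCoeff, constantCoeff_mk, map_one]
    norm_num
    linear_combination h0
  · have h1 : xL * HahnSeries.single (-((n : ℤ) + 1 + 1)) 1
        = HahnSeries.single (-((n : ℤ) + 1)) 1 := by
      rw [xL_mul_single]; congr 1
    simp only [add_mul, map_add, mul_assoc, coeff_C_mul, coeff_succ_X_mul, ψ, coeff_mk,
      coeff_one, Nat.succ_ne_zero, if_false]
    push_cast
    linear_combination (q ^ (n + 1)) * h1

lemma denom_inv :
    (C (-xL) + C (2 + 5 * xL + 2 * xL ^ 2) * X)⁻¹ = ψ := by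
  refine (PowerSeries.inv_eq_iff_mul_eq_one ?_).mpr (by rw [mul_comm]; exact key_mul)
  simp only [map_add, map_mul, constantCoeff_C, constantCoeff_X, mul_zero, add_zero,
    RingHom.coe_comp, Function.comp_apply]
  simpa using xL_ne_zero

lemma ratCT_eq : ratCT = (C (-xL) + C (4 + 5 * xL) * X) * ψ := by
  rw [ratCT, denom_inv]

lemma coeff_ratCT_zero : (coeff 0) ratCT = 1 := by
  rw [ratCT_eq]
  have h0 : xL * HahnSeries.single (-1 : ℤ) 1 = 1 := by
    rw [xL_mul_single]; norm_num [HahnSeries.single_zero_one]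
  simp only [add_mul, map_add, mul_assoc, coeff_C_mul, coeff_zero_X_mul, mul_zero, add_zero,
    ψ, coeff_zero_eq_constantCoeff, constantCoeff_mk]
  norm_num
  linear_combination h0

lemma coeff_ratCT_succ (n : ℕ) :
    (coeff (n + 1)) ratCT
      = (2 * xL ^ 2 - 2) * q ^ n * HahnSeries.single (-(n + 1) : ℤ) 1 := by
  rw [ratCT_eq]
  have h1 : xL * HahnSeries.single (-((n : ℤ) + 1 + 1)) 1
      = HahnSeries.single (-((n : ℤ) + 1)) 1 := by
    rw [xL_mul_single]; congr 1
  have hq : q = 2 + 5 * xL + 2 * xL ^ 2 := rfl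
  simp only [add_mul, map_add, mul_assoc, coeff_C_mul, coeff_succ_X_mul, ψ, coeff_mk]
  push_cast
  linear_combination (q ^ (n + 1)) * h1
    + (q ^ n * HahnSeries.single (-((n : ℤ) + 1)) 1) * hq

/-- The polynomial `2 + 5X + 2X²`. -/
noncomputable def Q : Polynomial ℚ :=
  Polynomial.C 2 + Polynomial.C 5 * Polynomial.X + Polynomial.C 2 * Polynomial.X ^ 2

lemma Q_natDegree : Q.natDegree = 2 := by
  unfold Q; compute_degree!

lemma Q_reverse : Q.reverse = Q := by
  have : Q = Polynomial.C 2 * Polynomial.X ^ 0 + Polynomial.C 5 * Polynomial.X ^ 1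
      + Polynomial.C 2 * Polynomial.X ^ 2 := by unfold Q; ring
  rw [Polynomial.reverse, Q_natDegree]
  nth_rewrite 1 [this]
  rw [Polynomial.reflect_add, Polynomial.reflect_add, Polynomial.reflect_C_mul_X_pow,
    Polynomial.reflect_C_mul_X_pow, Polynomial.reflect_C_mul_X_pow]
  norm_num [Polynomial.revAt_le]
  unfold Q; ring

lemma Qpow_reverse (n : ℕ) : (Q ^ n).reverse = Q ^ n := by
  induction n with
  | zero => simp [Polynomial.reverse, Polynomial.reflect_one]
  | succ k ih => rw [pow_succ, Polynomial.reverse_mul_of_domain, ih, Q_reverse]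

lemma Qpow_symm (n : ℕ) (hn : 1 ≤ n) : (Q ^ n).coeff (n + 1) = (Q ^ n).coeff (n - 1) := by
  conv_lhs => rw [← Qpow_reverse]
  rw [Polynomial.coeff_reverse, Polynomial.natDegree_pow, Q_natDegree,
    Polynomial.revAt_le (by omega)]
  congr 1
  omega

lemma poly_coeff_zero (n : ℕ) :
    ((2 * Polynomial.X ^ 2 - 2) * Q ^ n).coeff (n + 1) = 0 := by
  rcases Nat.eq_zero_or_pos n with rfl | hn
  · norm_num
  · have h : (2 * Polynomial.X ^ 2 - 2) * Q ^ n
        = (2 * Q ^ n) * Polynomial.X ^ 2 - 2 * Q ^ n := by ring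
    rw [h, Polynomial.coeff_sub, Polynomial.coeff_mul_X_pow', if_pos (by omega : 2 ≤ n + 1)]
    have h2 : n + 1 - 2 = n - 1 := by omega
    rw [h2]
    simp only [Polynomial.coeff_ofNat_mul]
    rw [← Qpow_symm n hn]
    ring

/-- ring hom from polynomials to Laurent series -/
noncomputable def φ : Polynomial ℚ →+* LaurentSeries ℚ :=
  (HahnSeries.ofPowerSeries ℤ ℚ).comp Polynomial.coeToPowerSeries.ringHom

lemma φ_X : φ Polynomial.X = xL := by
  simp [φ, Polynomial.coeToPowerSeries.ringHom_apply, Polynomial.coe_X,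
    HahnSeries.ofPowerSeries_X, xL]

lemma φ_coeff (P : Polynomial ℚ) (k : ℕ) : (φ P).coeff (k : ℤ) = P.coeff k := by
  simp [φ, Polynomial.coeToPowerSeries.ringHom_apply, LaurentSeries.coeff_coe_powerSeries,
    Polynomial.coeff_coe]

lemma φ_image (n : ℕ) :
    φ ((2 * Polynomial.X ^ 2 - 2) * Q ^ n) = (2 * xL ^ 2 - 2) * q ^ n := by
  rw [map_mul, map_sub, map_mul, map_pow, map_pow, φ_X]
  rw [q, Q]
  rw [map_add, map_add, map_mul, map_mul, map_pow, φ_X]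
  simp only [map_ofNat]

lemma coeff_vanish (n : ℕ) : ((2 * xL ^ 2 - 2) * q ^ n : LaurentSeries ℚ).coeff ((n : ℤ) + 1) = 0 := by
  rw [← φ_image]
  have : ((n : ℤ) + 1) = ((n + 1 : ℕ) : ℤ) := by push_cast; ring
  rw [this, φ_coeff, poly_coeff_zero]

end Stmt12Aux

/-- `CT_x [(4t+(5t−1)x)/(2t+(5t−1)x+2tx²)] = 1`, coefficientwise in `t`. -/
theorem stmt12 (n : ℕ) :
    ((coeff n) ratCT).coeff 0 = if n = 0 then 1 else 0 := by
  rcases n with _ | m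
  · simp [Stmt12Aux.coeff_ratCT_zero]
  · rw [Stmt12Aux.coeff_ratCT_succ m, if_neg (Nat.succ_ne_zero m)]
    have h := HahnSeries.coeff_mul_single_add
      (r := (1 : ℚ)) (x := (2 * xL ^ 2 - 2) * Stmt12Aux.q ^ m)
      (a := ((m : ℤ) + 1)) (b := (-(m + 1) : ℤ))
    rw [show ((m : ℤ) + 1) + (-(m + 1) : ℤ) = 0 by ring] at h
    rw [h, Stmt12Aux.coeff_vanish, zero_mul]
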